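/- Let d, n ∈ ℕ with 1 ≤ d ≤ n, and let P = X_1·X_2⋯X_d − 1 ∈ ℝ[X_1,…,X_n]. Then the real zero set Z(P, ℝ^n) has exactly 2^{d−1} connected components. (This shows the bound 2^{d−1} on the number of connected components of the zero set of a degree-d multi-affine polynomial is sharp.) -/

import Mathlib

open MvPolynomial Real

namespace ProdComp

variable {n d : ℕ}


variable {n d : ℕ}

def Zset (hdn : d ≤ n) : Set (Fin n → ℝ) := {x | ∏ i : Fin d, x (Fin.castLE hdn i) = 1}

lemma mem_Zset {hdn : d ≤ n} {x : Fin n → ℝ} :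
    x ∈ Zset hdn ↔ ∏ i : Fin d, x (Fin.castLE hdn i) = 1 := Iff.rfl

def pat (ε : Fin d → ℝ) : Prop := (∀ i, ε i = 1 ∨ ε i = -1) ∧ ∏ i, ε i = 1

def S (hdn : d ≤ n) (ε : Fin d → ℝ) : Set (Fin n → ℝ) :=
  {x | x ∈ Zset hdn ∧ ∀ i, 0 < ε i * x (Fin.castLE hdn i)}

lemma mem_Z_ne_zero {hdn : d ≤ n} {x : Fin n → ℝ} (hx : x ∈ Zset hdn) (i : Fin d) :
    x (Fin.castLE hdn i) ≠ 0 := by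
  intro h
  have h0 : ∏ i : Fin d, x (Fin.castLE hdn i) = 0 :=
    Finset.prod_eq_zero (Finset.mem_univ i) h
  rw [mem_Zset.1 hx] at h0
  exact one_ne_zero h0

lemma exists_pat {hdn : d ≤ n} {x : Fin n → ℝ} (hx : x ∈ Zset hdn) :
    ∃ ε : Fin d → ℝ, pat ε ∧ x ∈ S hdn ε := by
  refine ⟨fun i => if x (Fin.castLE hdn i) < 0 then -1 else 1, ⟨fun i => ?_, ?_⟩, hx, fun i => ?_⟩
  · dsimp only; split <;> simp
  · have h1 : ∀ i : Fin d, (if x (Fin.castLE hdn i) < 0 then (-1:ℝ) else 1)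
        = |x (Fin.castLE hdn i)| / x (Fin.castLE hdn i) := by
      intro i
      have hne := mem_Z_ne_zero hx i
      rcases lt_or_gt_of_ne hne with h | h
      · rw [if_pos h, abs_of_neg h]; field_simp
      · rw [if_neg (not_lt.2 h.le), abs_of_pos h]; field_simp
    rw [Finset.prod_congr rfl (fun i _ => h1 i), Finset.prod_div_distrib,
      ← Finset.abs_prod, mem_Zset.1 hx]
    norm_num
  · dsimp only
    have hne := mem_Z_ne_zero hx i
    rcases lt_or_gt_of_ne hne with h | h
    · rw [if_pos h]; nlinarith
    · rw [if_neg (not_lt.2 h.le)]; nlinarith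

lemma castLE_val {hdn : d ≤ n} (i : Fin d) (h : ((Fin.castLE hdn i : Fin n) : ℕ) < d) :
    (⟨(Fin.castLE hdn i : Fin n), h⟩ : Fin d) = i := Fin.ext (by simp)

lemma S_nonempty {hdn : d ≤ n} {ε : Fin d → ℝ} (hε : pat ε) :
    (fun j : Fin n => if h : (j : ℕ) < d then ε ⟨j, h⟩ else 0) ∈ S hdn ε := by
  have key : ∀ i : Fin d,
      (if h : ((Fin.castLE hdn i : Fin n) : ℕ) < d then ε ⟨(Fin.castLE hdn i : Fin n), h⟩ else 0)
        = ε i := by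
    intro i
    rw [dif_pos (by simp [i.isLt])]
    exact congrArg ε (castLE_val i _)
  constructor
  · rw [mem_Zset]
    rw [Finset.prod_congr rfl fun i _ => key i]
    exact hε.2
  · intro i
    dsimp only
    rw [key i]
    rcases hε.1 i with h | h <;> rw [h] <;> norm_num


variable {n d : ℕ}

lemma sum_log_eq_zero {hdn : d ≤ n} {x : Fin n → ℝ} (hx : x ∈ Zset hdn) :
    ∑ i : Fin d, Real.log |x (Fin.castLE hdn i)| = 0 := by
  rw [← Real.log_prod (fun i _ => abs_ne_zero.2 (mem_Z_ne_zero hx i)),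
    ← Finset.abs_prod, mem_Zset.1 hx, abs_one, Real.log_one]

lemma joinedIn {hdn : d ≤ n} {ε : Fin d → ℝ} (hε : pat ε) {x y : Fin n → ℝ}
    (hx : x ∈ S hdn ε) (hy : y ∈ S hdn ε) : JoinedIn (S hdn ε) x y := by
  set γ : ℝ → Fin n → ℝ := fun t j =>
    if h : (j : ℕ) < d then
      ε ⟨j, h⟩ * Real.exp ((1 - t) * Real.log |x j| + t * Real.log |y j|)
    else (1 - t) * x j + t * y j with hγ
  have hcont : Continuous γ := by
    refine continuous_pi fun j => ?_
    by_cases h : (j : ℕ) < d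
    · simp only [hγ, dif_pos h]; fun_prop
    · simp only [hγ, dif_neg h]; fun_prop
  have hεsq : ∀ i : Fin d, ε i * ε i = 1 := by
    intro i; rcases hε.1 i with h | h <;> rw [h] <;> norm_num
  have key : ∀ (t : ℝ) (i : Fin d), γ t (Fin.castLE hdn i)
      = ε i * Real.exp ((1 - t) * Real.log |x (Fin.castLE hdn i)|
          + t * Real.log |y (Fin.castLE hdn i)|) := by
    intro t i
    have hlt : ((Fin.castLE hdn i : Fin n) : ℕ) < d := by simp [i.isLt]
    simp only [hγ, dif_pos hlt]
    rfl
  have hmem : ∀ t : ℝ, γ t ∈ S hdn ε := by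
    intro t
    constructor
    · rw [mem_Zset, Finset.prod_congr rfl fun i _ => key t i, Finset.prod_mul_distrib,
        hε.2, one_mul, ← Real.exp_sum, Finset.sum_add_distrib, ← Finset.mul_sum,
        ← Finset.mul_sum, sum_log_eq_zero hx.1, sum_log_eq_zero hy.1]
      simp
    · intro i
      rw [key t i, ← mul_assoc, hεsq i, one_mul]
      exact Real.exp_pos _
  have ends : ∀ z : Fin n → ℝ, z ∈ S hdn ε → ∀ j : Fin n, ∀ h : (j : ℕ) < d,
      ε ⟨j, h⟩ * |z j| = z j := by
    intro z hz j h
    have hpos := hz.2 ⟨j, h⟩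
    have hcast : (Fin.castLE hdn ⟨j, h⟩ : Fin n) = j := Fin.ext (by simp)
    rw [hcast] at hpos
    rcases hε.1 ⟨j, h⟩ with he | he <;> rw [he] at hpos ⊢
    · rw [one_mul] at hpos ⊢; exact abs_of_pos hpos
    · rw [neg_one_mul] at hpos ⊢
      rw [abs_of_neg (by linarith), neg_neg]
  have hne : ∀ z : Fin n → ℝ, z ∈ S hdn ε → ∀ j : Fin n, (j : ℕ) < d → z j ≠ 0 := by
    intro z hz j h hzero
    have := hz.2 ⟨j, h⟩
    rw [show (Fin.castLE hdn ⟨j, h⟩ : Fin n) = j from Fin.ext (by simp), hzero] at this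
    simp at this
  have h0 : γ 0 = x := by
    funext j
    by_cases h : (j : ℕ) < d
    · simp only [hγ, dif_pos h]
      have harg : (1 - (0:ℝ)) * Real.log |x j| + 0 * Real.log |y j| = Real.log |x j| := by ring
      rw [harg, Real.exp_log (abs_pos.2 (hne x hx j h))]
      exact ends x hx j h
    · simp only [hγ, dif_neg h]; ring
  have h1 : γ 1 = y := by
    funext j
    by_cases h : (j : ℕ) < d
    · simp only [hγ, dif_pos h]
      have harg : (1 - (1:ℝ)) * Real.log |x j| + 1 * Real.log |y j| = Real.log |y j| := by ring
      rw [harg, Real.exp_log (abs_pos.2 (hne y hy j h))]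
      exact ends y hy j h
    · simp only [hγ, dif_neg h]; ring
  exact ⟨⟨⟨fun t => γ t, hcont.comp continuous_subtype_val⟩, h0, h1⟩, fun t => hmem t⟩


variable {n d : ℕ}

lemma S_preconnected {hdn : d ≤ n} {ε : Fin d → ℝ} (hε : pat ε) :
    IsPreconnected (S hdn ε) := by
  refine (IsPathConnected.isConnected ⟨_, S_nonempty hε, ?_⟩).isPreconnected
  intro y hy
  exact joinedIn hε (S_nonempty hε) hy

lemma eps_ne_zero {ε : Fin d → ℝ} (hε : pat ε) (i : Fin d) : ε i ≠ 0 := by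
  rcases hε.1 i with h | h <;> rw [h] <;> norm_num

lemma comp_eq {hdn : d ≤ n} {ε : Fin d → ℝ} (hε : pat ε) {x : Fin n → ℝ}
    (hx : x ∈ S hdn ε) : connectedComponentIn (Zset hdn) x = S hdn ε := by
  apply Set.Subset.antisymm
  · set U : Set (Fin n → ℝ) := {z | ∀ i, 0 < ε i * z (Fin.castLE hdn i)} with hU
    set V : Set (Fin n → ℝ) := ⋃ i : Fin d, {z | ε i * z (Fin.castLE hdn i) < 0} with hV
    have hUopen : IsOpen U := by
      have : U = ⋂ i : Fin d, {z : Fin n → ℝ | 0 < ε i * z (Fin.castLE hdn i)} := by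
        ext z; simp [hU]
      rw [this]
      exact isOpen_iInter_of_finite fun i =>
        isOpen_lt continuous_const (by fun_prop)
    have hVopen : IsOpen V := isOpen_iUnion fun i =>
      isOpen_lt (by fun_prop) continuous_const
    set C := connectedComponentIn (Zset hdn) x with hC
    have hCZ : C ⊆ Zset hdn := connectedComponentIn_subset _ _
    have hCUV : C ⊆ U ∪ V := by
      intro z hz
      by_cases hall : ∀ i, 0 < ε i * z (Fin.castLE hdn i)
      · exact Or.inl hall
      · push_neg at hall
        obtain ⟨i, hi⟩ := hall
        refine Or.inr (Set.mem_iUnion.2 ⟨i, ?_⟩)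
        have hne : ε i * z (Fin.castLE hdn i) ≠ 0 :=
          mul_ne_zero (eps_ne_zero hε i) (mem_Z_ne_zero (hCZ hz) i)
        exact lt_of_le_of_ne hi hne
    have hxC : x ∈ C := mem_connectedComponentIn hx.1
    have hpre : IsPreconnected C := isPreconnected_connectedComponentIn
    have hCV : C ∩ V = ∅ := by
      by_contra hne
      obtain ⟨w, hw⟩ := Set.nonempty_iff_ne_empty.2 hne
      obtain ⟨z, hz⟩ := hpre U V hUopen hVopen hCUV ⟨x, hxC, hx.2⟩ ⟨w, hw⟩
      obtain ⟨i, hi⟩ := Set.mem_iUnion.1 hz.2.2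
      exact absurd (hz.2.1 i) (not_lt.2 hi.le)
    intro z hz
    have hzU : z ∈ U := by
      rcases hCUV hz with h | h
      · exact h
      · exfalso
        have : z ∈ C ∩ V := ⟨hz, h⟩
        rw [hCV] at this
        exact this
    exact ⟨hCZ hz, hzU⟩
  · exact (S_preconnected hε).subset_connectedComponentIn hx
      (fun z hz => hz.1)


variable {n d : ℕ}

lemma S_injOn (hdn : d ≤ n) : Set.InjOn (S hdn) {ε | pat ε} := by
  intro ε hε ε' hε' heq
  have hx := S_nonempty (hdn := hdn) hε
  have hx' : _ ∈ S hdn ε' := heq ▸ hx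
  funext i
  have h1 := hx.2 i
  have h2 := hx'.2 i
  set c := (fun j : Fin n => if h : (j : ℕ) < d then ε ⟨j, h⟩ else 0) (Fin.castLE hdn i)
  rcases hε.1 i with h | h <;> rcases hε'.1 i with h' | h'
  · rw [h, h']
  · exfalso; rw [h] at h1; rw [h'] at h2; nlinarith
  · exfalso; rw [h] at h1; rw [h'] at h2; nlinarith
  · rw [h, h']

lemma comps_eq (hdn : d ≤ n) :
    {K | ∃ x ∈ Zset hdn, K = connectedComponentIn (Zset hdn) x} = S hdn '' {ε | pat ε} := by
  ext K
  constructor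
  · rintro ⟨x, hx, rfl⟩
    obtain ⟨ε, hε, hxε⟩ := exists_pat hx
    exact ⟨ε, hε, (comp_eq hε hxε).symm⟩
  · rintro ⟨ε, hε, rfl⟩
    have hx := S_nonempty (hdn := hdn) hε
    exact ⟨_, hx.1, (comp_eq hε hx).symm⟩

lemma prod_pm_one {m : ℕ} {g : Fin m → ℝ} (hg : ∀ i, g i = 1 ∨ g i = -1) :
    ∏ i, g i = 1 ∨ ∏ i, g i = -1 := by
  apply mul_self_eq_one_iff.1
  rw [← Finset.prod_mul_distrib]
  exact Finset.prod_eq_one fun i _ => by rcases hg i with h | h <;> rw [h] <;> norm_num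

lemma pat_ncard (hd : 1 ≤ d) : {ε : Fin d → ℝ | pat ε}.ncard = 2 ^ (d - 1) := by
  obtain ⟨e, rfl⟩ : ∃ e, d = e + 1 := ⟨d - 1, (Nat.succ_pred_eq_of_pos hd).symm⟩
  simp only [Nat.add_sub_cancel]
  set r : (Fin (e + 1) → ℝ) → (Fin e → ℝ) := fun ε => ε ∘ Fin.castSucc with hr
  have hinj : Set.InjOn r {ε | pat ε} := by
    intro ε hε ε' hε' heq
    have hA : ∏ i : Fin e, ε (Fin.castSucc i) = ∏ i : Fin e, ε' (Fin.castSucc i) := by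
      apply Finset.prod_congr rfl
      intro i _
      exact congrFun heq i
    have hAne : ∏ i : Fin e, ε (Fin.castSucc i) ≠ 0 := by
      apply Finset.prod_ne_zero_iff.2
      intro i _
      rcases hε.1 (Fin.castSucc i) with h | h <;> rw [h] <;> norm_num
    have hl : ε (Fin.last e) = ε' (Fin.last e) := by
      have p1 := hε.2
      have p2 := hε'.2
      rw [Fin.prod_univ_castSucc] at p1 p2
      rw [← hA] at p2
      exact mul_left_cancel₀ hAne (p1.trans p2.symm)
    funext j
    rcases Fin.lastCases (motive := fun j => ε j = ε' j) hl (fun i => congrFun heq i) j with h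
    exact h
  have himg : r '' {ε | pat ε} = {g : Fin e → ℝ | ∀ i, g i = 1 ∨ g i = -1} := by
    ext g
    constructor
    · rintro ⟨ε, hε, rfl⟩
      exact fun i => hε.1 (Fin.castSucc i)
    · intro hg
      have hcpm := prod_pm_one hg
      refine ⟨(Fin.snoc g (∏ i, g i) : Fin (e+1) → ℝ), ⟨fun i => ?_, ?_⟩, ?_⟩
      · refine Fin.lastCases ?_ ?_ i
        · rw [Fin.snoc_last]; exact hcpm
        · intro j; rw [Fin.snoc_castSucc]; exact hg j
      · rw [Fin.prod_univ_castSucc]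
        simp only [Fin.snoc_last, Fin.snoc_castSucc]
        rcases hcpm with h | h <;> rw [h] <;> norm_num
      · funext i
        show (Fin.snoc g (∏ i, g i) : Fin (e+1) → ℝ) (Fin.castSucc i) = g i
        exact Fin.snoc_castSucc _ _ _
  have := Set.ncard_image_of_injOn hinj
  rw [himg] at this
  rw [← this]
  -- remaining: ncard {g : Fin e → ℝ | ∀ i, g i = 1 ∨ g i = -1} = 2 ^ e
  classical
  have myE : {g : Fin e → ℝ | ∀ i, g i = 1 ∨ g i = -1} ≃ (Fin e → Bool) :=
    { toFun := fun g i => decide (g.1 i = -1)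
      invFun := fun b => ⟨fun i => if b i then -1 else 1, fun i => by
        by_cases h : b i <;> simp [h]⟩
      left_inv := by
        rintro ⟨g, hg⟩
        apply Subtype.ext
        funext i
        by_cases h : g i = -1
        · simp [h]
        · have h1 : g i = 1 := (hg i).resolve_right h
          have hd : decide (g i = -1) = false := decide_eq_false h
          simp [hd, h1]
          intro hx
          norm_num at hx
      right_inv := by
        intro b
        funext i
        by_cases h : b i <;> simp [h] <;> norm_num }
  rw [← Nat.card_coe_set_eq, Nat.card_congr myE, Nat.card_eq_fintype_card]
  simp


lemma main_count (hd : 1 ≤ d) (hdn : d ≤ n) :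
    {K | ∃ x ∈ Zset hdn, K = connectedComponentIn (Zset hdn) x}.ncard = 2 ^ (d - 1) := by
  rw [comps_eq hdn, Set.ncard_image_of_injOn (S_injOn hdn), pat_ncard hd]

end ProdComp

/-- The zero set of `X_1 ⋯ X_d - 1` in `ℝ^n` has exactly `2^(d-1)` connected components. -/
theorem product_minus_one_components (d n : ℕ) (hd : 1 ≤ d) (hdn : d ≤ n) :
    letI P : MvPolynomial (Fin n) ℝ := (∏ i : Fin d, X (Fin.castLE hdn i)) - 1
    letI Z : Set (Fin n → ℝ) := {x | eval x P = 0}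
    {K | ∃ x ∈ Z, K = connectedComponentIn Z x}.ncard = 2 ^ (d - 1) := by
  have hZ : {x : Fin n → ℝ |
      eval x ((∏ i : Fin d, X (Fin.castLE hdn i)) - 1 : MvPolynomial (Fin n) ℝ) = 0}
      = ProdComp.Zset hdn := by
    ext x
    simp [ProdComp.Zset, sub_eq_zero]
  show ({K | ∃ x ∈ {x : Fin n → ℝ |
      eval x ((∏ i : Fin d, X (Fin.castLE hdn i)) - 1 : MvPolynomial (Fin n) ℝ) = 0},
      K = connectedComponentIn {x : Fin n → ℝ |
        eval x ((∏ i : Fin d, X (Fin.castLE hdn i)) - 1 : MvPolynomial (Fin n) ℝ) = 0} x}).ncard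
    = 2 ^ (d - 1)
  rw [hZ]
  exact ProdComp.main_count hd hdn
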